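/- Let H be a bounded implicative semilattice and a ∈ H. Then G_a = {b ∈ H : ¬¬a ∧ (b → a) ≤ b} is a filter of H: 1 ∈ G_a, G_a is an upset, and it is closed under meets. Consequently, every finite bounded implicative semilattice has a Gabbay function G(a) = min G_a. -/

import Mathlib

namespace FH

variable {H : Type*}

/-- Hilbert algebra axioms for `(imp, one)`. -/
def IsHilbert (imp : H → H → H) (one : H) : Prop :=
  (∀ a b : H, imp a (imp b a) = one) ∧
  (∀ a b c : H, imp (imp a (imp b c)) (imp (imp a b) (imp a c)) = one) ∧
  (∀ a b : H, imp a b = one → imp b a = one → a = b)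

/-- The natural order of a Hilbert algebra. -/
def hle (imp : H → H → H) (one : H) (a b : H) : Prop := imp a b = one

/-- Implicative filter. -/
def IsImpFilter (imp : H → H → H) (one : H) (F : Set H) : Prop :=
  one ∈ F ∧ ∀ a b : H, a ∈ F → imp a b ∈ F → b ∈ F

/-- Irreducible implicative filter. -/
def IsIrr (imp : H → H → H) (one : H) (F : Set H) : Prop :=
  IsImpFilter imp one F ∧ F ≠ Set.univ ∧
    ∀ F1 F2 : Set H, IsImpFilter imp one F1 → IsImpFilter imp one F2 →
      F = F1 ∩ F2 → (F = F1 ∨ F = F2)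

/-- `φ(a) = {P ∈ X(H) : a ∈ P}`. -/
def phi (imp : H → H → H) (one : H) (a : H) : Set (Set H) :=
  {P | IsIrr imp one P ∧ a ∈ P}

/-- `X(H)`, the set of irreducible implicative filters. -/
def XH (imp : H → H → H) (one : H) : Set (Set H) := {P | IsIrr imp one P}

/-- Upsets of the poset `(X(H), ⊆)`. -/
def IsUp (imp : H → H → H) (one : H) (U : Set (Set H)) : Prop :=
  (∀ P ∈ U, IsIrr imp one P) ∧
    ∀ P Q : Set H, P ∈ U → IsIrr imp one Q → P ⊆ Q → Q ∈ U

/-- Heyting implication `U ⇒ V` on upsets of `X(H)` (the complement relative to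
`X(H)` of the downset generated by `U ∩ Vᶜ`). -/
def himp (imp : H → H → H) (one : H) (U V : Set (Set H)) : Set (Set H) :=
  {P | IsIrr imp one P ∧ ∀ Q : Set H, IsIrr imp one Q → P ⊆ Q → Q ∈ U → Q ∈ V}

/-- Frontal operator on a Hilbert algebra. -/
def IsFrontal (imp : H → H → H) (one : H) (t : H → H) : Prop :=
  (∀ a b : H, hle imp one (t (imp a b)) (imp (t a) (t b))) ∧
  (∀ a : H, hle imp one a (t a)) ∧
  (∀ a b : H, hle imp one (t a) (imp (imp (imp b a) b) b))

/-- The elements of `⟨φ[H]⟩`: finite (nonempty) intersections `φ(a₁) ∩ ⋯ ∩ φ(aₙ)`. -/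
def gen (imp : H → H → H) (one : H) (U : Set (Set H)) : Prop :=
  ∃ l : List H, l ≠ [] ∧ U = {P | IsIrr imp one P ∧ ∀ a ∈ l, a ∈ P}

/-- The π-extension `τ^π` of a unary map `t` to the upsets of `X(H)`. -/
def tpi (imp : H → H → H) (one : H) (t : H → H) (U : Set (Set H)) : Set (Set H) :=
  {P | IsIrr imp one P ∧ ∀ Q : Set H, IsIrr imp one Q → t ⁻¹' P ⊆ Q → Q ∈ U}

/-- Maximal elements (w.r.t. inclusion) of a family of sets. -/
def Mx (S : Set (Set H)) : Set (Set H) := {P ∈ S | ∀ Q ∈ S, P ⊆ Q → P = Q}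

/-- Relative complement in `X(H)`. -/
def Xc (imp : H → H → H) (one : H) (U : Set (Set H)) : Set (Set H) :=
  {P | IsIrr imp one P ∧ P ∉ U}

/-- Downset (within `X(H)`) generated by a family `S`. -/
def dn (imp : H → H → H) (one : H) (S : Set (Set H)) : Set (Set H) :=
  {P | IsIrr imp one P ∧ ∃ Q ∈ S, P ⊆ Q}

/-- Implicative semilattice axioms for `(inf, imp, one)`. -/
def IsImpSL (inf : H → H → H) (imp : H → H → H) (one : H) : Prop :=
  (∀ a b : H, inf a b = inf b a) ∧
  (∀ a b c : H, inf (inf a b) c = inf a (inf b c)) ∧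
  (∀ a : H, inf a a = a) ∧
  (∀ a : H, inf a one = a) ∧
  (∀ a b c : H, inf (inf a b) c = inf a b ↔ inf a (imp b c) = a)

/-- The semilattice order: `a ≤ b` iff `a ∧ b = a`. -/
def sle (inf : H → H → H) (a b : H) : Prop := inf a b = a

end FH

/-- In a bounded implicative semilattice, for every `a` the set
`G_a = {b : ¬¬a ∧ (b → a) ≤ b}` is a filter (contains `1`, is an upset, closed
under meets); consequently every finite bounded implicative semilattice has a
Gabbay function `G(a) = min G_a`. -/
theorem stmt_18 {B : Type*} (inf : B → B → B) (imp : B → B → B) (zero one : B)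
    (hS : FH.IsImpSL inf imp one) (hbot : ∀ a : B, FH.sle inf zero a) (a : B) :
    (one ∈ {b : B | FH.sle inf (inf (imp (imp a zero) zero) (imp b a)) b}) ∧
    (∀ b c : B, b ∈ {b : B | FH.sle inf (inf (imp (imp a zero) zero) (imp b a)) b} →
      FH.sle inf b c →
      c ∈ {b : B | FH.sle inf (inf (imp (imp a zero) zero) (imp b a)) b}) ∧
    (∀ b c : B, b ∈ {b : B | FH.sle inf (inf (imp (imp a zero) zero) (imp b a)) b} →
      c ∈ {b : B | FH.sle inf (inf (imp (imp a zero) zero) (imp b a)) b} →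
      inf b c ∈ {b : B | FH.sle inf (inf (imp (imp a zero) zero) (imp b a)) b}) ∧
    (Finite B → ∃ m ∈ {b : B | FH.sle inf (inf (imp (imp a zero) zero) (imp b a)) b},
      ∀ b ∈ {b : B | FH.sle inf (inf (imp (imp a zero) zero) (imp b a)) b},
        FH.sle inf m b) := by
  classical
  obtain ⟨hcomm, hassoc, hidem, honer, hres⟩ := hS
  -- basic order facts
  have hrefl : ∀ x : B, FH.sle inf x x := hidem
  have htrans : ∀ x y z : B, FH.sle inf x y → FH.sle inf y z → FH.sle inf x z := by
    intro x y z h1 h2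
    unfold FH.sle at *
    calc inf x z = inf (inf x y) z := by rw [h1]
      _ = inf x (inf y z) := hassoc x y z
      _ = inf x y := by rw [h2]
      _ = x := h1
  have hinf_le_left : ∀ x y : B, FH.sle inf (inf x y) x := by
    intro x y
    unfold FH.sle
    rw [hassoc, hcomm y x, ← hassoc, hidem]
  have hinf_le_right : ∀ x y : B, FH.sle inf (inf x y) y := by
    intro x y
    unfold FH.sle
    rw [hassoc, hidem]
  have hle_inf : ∀ x y z : B, FH.sle inf x y → FH.sle inf x z → FH.sle inf x (inf y z) := by
    intro x y z h1 h2
    unfold FH.sle at *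
    rw [← hassoc, h1, h2]
  have hle_top : ∀ x : B, FH.sle inf x one := honer
  -- residuation
  have hres_fwd : ∀ x y z : B, FH.sle inf x (imp y z) → FH.sle inf (inf x y) z := by
    intro x y z h; exact (hres x y z).mpr h
  have hres_bwd : ∀ x y z : B, FH.sle inf (inf x y) z → FH.sle inf x (imp y z) := by
    intro x y z h; exact (hres x y z).mp h
  have himp_anti : ∀ b c x : B, FH.sle inf b c → FH.sle inf (imp c x) (imp b x) := by
    intro b c x hbc
    apply hres_bwd
    have h1 : FH.sle inf (inf (imp c x) b) (inf (imp c x) c) :=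
      hle_inf _ _ _ (hinf_le_left _ _) (htrans _ _ _ (hinf_le_right _ _) hbc)
    exact htrans _ _ _ h1 (hres_fwd _ _ _ (hrefl _))
  set N := imp (imp a zero) zero with hN
  -- the three filter properties
  have h1 : one ∈ {b : B | FH.sle inf (inf N (imp b a)) b} := hle_top _
  have h2 : ∀ b c : B, b ∈ {b : B | FH.sle inf (inf N (imp b a)) b} →
      FH.sle inf b c → c ∈ {b : B | FH.sle inf (inf N (imp b a)) b} := by
    intro b c hb hbc
    have hmono : FH.sle inf (inf N (imp c a)) (inf N (imp b a)) :=
      hle_inf _ _ _ (hinf_le_left _ _)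
        (htrans _ _ _ (hinf_le_right _ _) (himp_anti _ _ _ hbc))
    exact htrans _ _ _ hmono (htrans _ _ _ hb hbc)
  have h3 : ∀ b c : B, b ∈ {b : B | FH.sle inf (inf N (imp b a)) b} →
      c ∈ {b : B | FH.sle inf (inf N (imp b a)) b} →
      inf b c ∈ {b : B | FH.sle inf (inf N (imp b a)) b} := by
    intro b c hb hc
    set x := inf N (imp (inf b c) a) with hx
    have hxN : FH.sle inf x N := hinf_le_left _ _
    have hximp : FH.sle inf x (imp (inf b c) a) := hinf_le_right _ _
    have hx1 : FH.sle inf (inf (inf x b) c) a := by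
      have := hres_fwd _ _ _ hximp
      rwa [← hassoc x b c] at this
    have hxcb : inf (inf x c) b = inf (inf x b) c := by
      rw [hassoc, hcomm c b, ← hassoc]
    have hxc_le_ba : FH.sle inf (inf x c) (imp b a) := by
      apply hres_bwd
      rw [show FH.sle inf (inf (inf x c) b) a = FH.sle inf (inf (inf x b) c) a from by rw [hxcb]]
      exact hx1
    have hxc_le_b : FH.sle inf (inf x c) b :=
      htrans _ _ _ (hle_inf _ _ _ (htrans _ _ _ (hinf_le_left _ _) hxN) hxc_le_ba) hb
    have hxc_le_a : FH.sle inf (inf x c) a := by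
      have : FH.sle inf (inf (inf x c) b) a := by rw [hxcb]; exact hx1
      unfold FH.sle at hxc_le_b
      rwa [hxc_le_b] at this
    have hx_le_c : FH.sle inf x c :=
      htrans _ _ _ (hle_inf _ _ _ hxN (hres_bwd _ _ _ hxc_le_a)) hc
    have hx_le_b : FH.sle inf x b := by
      have : inf x c = x := hx_le_c
      have h := hxc_le_b
      unfold FH.sle at h ⊢
      rwa [this] at h
    exact hle_inf _ _ _ hx_le_b hx_le_c
  refine ⟨h1, h2, h3, ?_⟩
  intro hfin
  have : Finite B := hfin
  set S := {b : B | FH.sle inf (inf N (imp b a)) b} with hSdef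
  have hSfin : S.Finite := Set.toFinite S
  set l := hSfin.toFinset.toList with hl
  have hmem_l : ∀ b ∈ S, b ∈ l := by
    intro b hb
    rw [hl, Finset.mem_toList, Set.Finite.mem_toFinset]
    exact hb
  -- fold inf over the list
  have key : ∀ L : List B, (∀ b ∈ L, b ∈ S) →
      (L.foldr inf one ∈ S ∧ ∀ b ∈ L, FH.sle inf (L.foldr inf one) b) := by
    intro L
    induction L with
    | nil => intro _; exact ⟨h1, by simp⟩
    | cons x t ih =>
      intro hsub
      have hx : x ∈ S := hsub x (List.mem_cons_self (a := x) (l := t))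
      have ht : ∀ b ∈ t, b ∈ S := fun b hb => hsub b (List.mem_cons_of_mem x hb)
      obtain ⟨ihm, ihb⟩ := ih ht
      constructor
      · exact h3 x _ hx ihm
      · intro b hb
        rcases List.mem_cons.mp hb with hbx | hbt
        · rw [hbx]; exact hinf_le_left _ _
        · exact htrans _ _ _ (hinf_le_right _ _) (ihb b hbt)
  have hl_sub : ∀ b ∈ l, b ∈ S := by
    intro b hb
    rw [hl, Finset.mem_toList, Set.Finite.mem_toFinset] at hb
    exact hb
  obtain ⟨hm, hmb⟩ := key l hl_sub
  exact ⟨l.foldr inf one, hm, fun b hb => hmb b (hmem_l b hb)⟩
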